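/- arXiv:1004.4623 — 2 statements merged into one kernel-verified Lean document; each statement's English description precedes it below -/
import Mathlib

section
/- Let m be a positive integer and let k, n be integers. If it is not the case that m is even with k ≡ m/2 (mod m) and n+1 ≡ m/2 (mod m), then ⌊(2n+2k)/m⌋ − ⌊(n+k)/m⌋ + 2⌊k/m⌋ − 2⌊2k/m⌋ ≥ 2⌊n/m⌋ − ⌊(2n+1)/m⌋ + ⌊(n−k+1)/m⌋. -/
private lemma floor_int_div (x m : ℤ) (hm : 0 < m) : ⌊(x : ℚ) / (m : ℚ)⌋ = x / m := by
  have h := Rat.floor_intCast_div_natCast x m.toNat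
  have hmn : ((m.toNat : ℤ)) = m := Int.toNat_of_nonneg hm.le
  have hq : ((m.toNat : ℚ)) = (m : ℚ) := by exact_mod_cast congrArg (fun z : ℤ => (z : ℚ)) hmn
  rw [hq, hmn] at h
  exact h

private lemma ediv_eq_of (m x q : ℤ) (hm : 0 < m) (h1 : m * q ≤ x) (h2 : x < m * (q + 1)) :
    x / m = q := by
  have h3 : q ≤ x / m := (Int.le_ediv_iff_mul_le hm).mpr (by nlinarith)
  have h4 : x / m < q + 1 := (Int.ediv_lt_iff_lt_mul hm).mpr (by nlinarith)
  omega

theorem stmt_8 (m : ℤ) (hm : 0 < m) (k n : ℤ)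
    (h : ¬ (Even m ∧ Int.ModEq m k (m / 2) ∧ Int.ModEq m (n + 1) (m / 2))) :
    ⌊(2 * (n : ℚ) + 2 * (k : ℚ)) / (m : ℚ)⌋ - ⌊((n : ℚ) + (k : ℚ)) / (m : ℚ)⌋ +
        2 * ⌊(k : ℚ) / (m : ℚ)⌋ - 2 * ⌊(2 * (k : ℚ)) / (m : ℚ)⌋ ≥
      2 * ⌊(n : ℚ) / (m : ℚ)⌋ - ⌊(2 * (n : ℚ) + 1) / (m : ℚ)⌋ +
        ⌊((n : ℚ) - (k : ℚ) + 1) / (m : ℚ)⌋ := by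
  have cast1 : (2 * (n : ℚ) + 2 * (k : ℚ)) = ((2 * n + 2 * k : ℤ) : ℚ) := by push_cast; ring
  have cast2 : ((n : ℚ) + (k : ℚ)) = ((n + k : ℤ) : ℚ) := by push_cast; ring
  have cast3 : (2 * (k : ℚ)) = ((2 * k : ℤ) : ℚ) := by push_cast; ring
  have cast4 : (2 * (n : ℚ) + 1) = ((2 * n + 1 : ℤ) : ℚ) := by push_cast; ring
  have cast5 : ((n : ℚ) - (k : ℚ) + 1) = ((n - k + 1 : ℤ) : ℚ) := by push_cast; ring
  rw [cast1, cast2, cast3, cast4, cast5, floor_int_div _ _ hm, floor_int_div _ _ hm,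
    floor_int_div _ _ hm, floor_int_div _ _ hm, floor_int_div _ _ hm, floor_int_div _ _ hm,
    floor_int_div _ _ hm]
  -- introduce quotients and remainders
  set a := k % m with ha
  set b := n % m with hb
  set qk := k / m with hqk
  set qn := n / m with hqn
  have hka : k = m * qk + a := by rw [ha, hqk]; exact (Int.mul_ediv_add_emod k m).symm
  have hnb : n = m * qn + b := by rw [hb, hqn]; exact (Int.mul_ediv_add_emod n m).symm
  have ha0 : 0 ≤ a := Int.emod_nonneg k hm.ne'
  have ham : a < m := Int.emod_lt_of_pos k hm
  have hb0 : 0 ≤ b := Int.emod_nonneg n hm.ne'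
  have hbm : b < m := Int.emod_lt_of_pos n hm
  have hm0 : m ≠ 0 := hm.ne'
  -- rewrite the big quotients
  have e1 : (2 * n + 2 * k) / m = (2 * a + 2 * b) / m + (2 * qn + 2 * qk) := by
    rw [show 2 * n + 2 * k = (2 * a + 2 * b) + m * (2 * qn + 2 * qk) by rw [hka, hnb]; ring]
    exact Int.add_mul_ediv_left _ _ hm0
  have e2 : (n + k) / m = (a + b) / m + (qn + qk) := by
    rw [show n + k = (a + b) + m * (qn + qk) by rw [hka, hnb]; ring]
    exact Int.add_mul_ediv_left _ _ hm0
  have e3 : (2 * k) / m = (2 * a) / m + 2 * qk := by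
    rw [show 2 * k = 2 * a + m * (2 * qk) by rw [hka]; ring]
    exact Int.add_mul_ediv_left _ _ hm0
  have e4 : (2 * n + 1) / m = (2 * b + 1) / m + 2 * qn := by
    rw [show 2 * n + 1 = (2 * b + 1) + m * (2 * qn) by rw [hnb]; ring]
    exact Int.add_mul_ediv_left _ _ hm0
  have e5 : (n - k + 1) / m = (b - a + 1) / m + (qn - qk) := by
    rw [show n - k + 1 = (b - a + 1) + m * (qn - qk) by rw [hka, hnb]; ring]
    exact Int.add_mul_ediv_left _ _ hm0
  rw [e1, e2, e3, e4, e5]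
  -- exclusion
  have hex : ¬ (2 * a = m ∧ 2 * b + 2 = m) := by
    rintro ⟨h1, h2⟩
    apply h
    refine ⟨⟨a, by omega⟩, ?_, ?_⟩
    · show k % m = (m / 2) % m
      have : m / 2 = a := by omega
      rw [this, ← ha, Int.emod_emod_of_dvd k dvd_rfl]
    · show (n + 1) % m = (m / 2) % m
      have h5 : m / 2 = b + 1 := by omega
      rw [h5]
      have : (n + 1) % m = (b + 1) % m := by
        conv_lhs => rw [hnb]
        rw [show m * qn + b + 1 = (b + 1) + m * qn by ring, Int.add_mul_emod_self_left]
      rw [this]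
  -- characterize the small quotients
  have q1 : ((2 * a + 2 * b) / m = 0 ∧ 2 * a + 2 * b < m) ∨
      ((2 * a + 2 * b) / m = 1 ∧ m ≤ 2 * a + 2 * b ∧ 2 * a + 2 * b < 2 * m) ∨
      ((2 * a + 2 * b) / m = 2 ∧ 2 * m ≤ 2 * a + 2 * b ∧ 2 * a + 2 * b < 3 * m) ∨
      ((2 * a + 2 * b) / m = 3 ∧ 3 * m ≤ 2 * a + 2 * b) := by
    rcases lt_or_ge (2 * a + 2 * b) m with hc | hc
    · exact Or.inl ⟨ediv_eq_of m _ 0 hm (by omega) (by omega), hc⟩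
    rcases lt_or_ge (2 * a + 2 * b) (2 * m) with hc2 | hc2
    · exact Or.inr (Or.inl ⟨ediv_eq_of m _ 1 hm (by omega) (by omega), hc, hc2⟩)
    rcases lt_or_ge (2 * a + 2 * b) (3 * m) with hc3 | hc3
    · exact Or.inr (Or.inr (Or.inl ⟨ediv_eq_of m _ 2 hm (by omega) (by omega), hc2, hc3⟩))
    · exact Or.inr (Or.inr (Or.inr ⟨ediv_eq_of m _ 3 hm (by omega) (by omega), hc3⟩))
  have q2 : ((a + b) / m = 0 ∧ a + b < m) ∨ ((a + b) / m = 1 ∧ m ≤ a + b) := by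
    rcases lt_or_ge (a + b) m with hc | hc
    · exact Or.inl ⟨ediv_eq_of m _ 0 hm (by omega) (by omega), hc⟩
    · exact Or.inr ⟨ediv_eq_of m _ 1 hm (by omega) (by omega), hc⟩
  have q3 : ((2 * a) / m = 0 ∧ 2 * a < m) ∨ ((2 * a) / m = 1 ∧ m ≤ 2 * a) := by
    rcases lt_or_ge (2 * a) m with hc | hc
    · exact Or.inl ⟨ediv_eq_of m _ 0 hm (by omega) (by omega), hc⟩
    · exact Or.inr ⟨ediv_eq_of m _ 1 hm (by omega) (by omega), hc⟩
  have q4 : ((2 * b + 1) / m = 0 ∧ 2 * b + 1 < m) ∨ ((2 * b + 1) / m = 1 ∧ m ≤ 2 * b + 1) := by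
    rcases lt_or_ge (2 * b + 1) m with hc | hc
    · exact Or.inl ⟨ediv_eq_of m _ 0 hm (by omega) (by omega), hc⟩
    · exact Or.inr ⟨ediv_eq_of m _ 1 hm (by omega) (by omega), hc⟩
  have q5 : ((b - a + 1) / m = -1 ∧ b - a + 1 < 0) ∨
      ((b - a + 1) / m = 0 ∧ 0 ≤ b - a + 1 ∧ b - a + 1 < m) ∨
      ((b - a + 1) / m = 1 ∧ m ≤ b - a + 1) := by
    rcases lt_or_ge (b - a + 1) 0 with hc | hc
    · exact Or.inl ⟨ediv_eq_of m _ (-1) hm (by omega) (by omega), hc⟩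
    rcases lt_or_ge (b - a + 1) m with hc2 | hc2
    · exact Or.inr (Or.inl ⟨ediv_eq_of m _ 0 hm (by omega) (by omega), hc, hc2⟩)
    · exact Or.inr (Or.inr ⟨ediv_eq_of m _ 1 hm (by omega) (by omega), hc2⟩)
  omega
end

section
/- For every positive integer n, the number (2n+1)·binom(2n,n) divides binom(6n,3n)·binom(3n,n); equivalently, the rational number n!·(6n)! / ((2n)!·(2n+1)!·(3n)!) is an integer. -/
lemma key_r (q r : ℕ) (hq : 2 ≤ q) (hr : r < q) :
    2*r/q + (2*r+1)/q + 3*r/q ≤ 6*r/q := by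
  have hq0 : 0 < q := by omega
  rcases eq_or_ne ((2*r+1) % q) 0 with h | h
  · have hdvd : q ∣ 2*r+1 := Nat.dvd_of_mod_eq_zero h
    have hq' : q = 2*r+1 := by
      rcases hdvd with ⟨k, hk⟩
      have hk2 : q*k < q*2 := by omega
      have := Nat.lt_of_mul_lt_mul_left hk2
      interval_cases k <;> omega
    subst hq'
    have h1 : 2*r/(2*r+1) = 0 := Nat.div_eq_of_lt (by omega)
    have h2 : (2*r+1)/(2*r+1) = 1 := Nat.div_self (by omega)
    have h3 : 3*r/(2*r+1) = 1 := by
      rw [Nat.div_eq_of_lt_le] <;> omega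
    have h4 : 6*r/(2*r+1) = 2 := by
      rw [Nat.div_eq_of_lt_le] <;> omega
    omega
  · have h1 : (2*r+1)/q = 2*r/q := by
      rw [Nat.succ_div, if_neg (fun hd => h (Nat.dvd_iff_mod_eq_zero.mp hd)), add_zero]
    rw [h1]
    -- need 2*(2r/q) + 3r/q ≤ 6r/q
    have e2 := Nat.div_add_mod (2*r) q
    have e3 := Nat.div_add_mod (3*r) q
    have m2 : 2*r % q < q := Nat.mod_lt _ hq0
    have m3 : 3*r % q < q := Nat.mod_lt _ hq0
    have b2 : 2*r/q ≤ 1 := by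
      have : 2*r/q < 2 := Nat.div_lt_of_lt_mul (by omega)
      omega
    have b3 : 3*r/q ≤ 2 := by
      have : 3*r/q < 3 := Nat.div_lt_of_lt_mul (by omega)
      omega
    rw [show 2*r/q + 2*r/q + 3*r/q = 2*(2*r/q) + 3*r/q by ring,
      Nat.le_div_iff_mul_le hq0]
    set s2 := 2*r/q with hs2
    set s3 := 3*r/q with hs3
    clear_value s2 s3
    interval_cases s2 <;> interval_cases s3 <;> omega

lemma key_q (q n : ℕ) (hq : 2 ≤ q) :
    2*n/q + (2*n+1)/q + 3*n/q ≤ n/q + 6*n/q := by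
  have hq0 : 0 < q := by omega
  obtain ⟨a, r, hr, rfl⟩ : ∃ a r, r < q ∧ n = r + a * q :=
    ⟨n / q, n % q, Nat.mod_lt _ hq0, by rw [Nat.mod_add_div']⟩
  have e1 : (r + a*q)/q = r/q + a := Nat.add_mul_div_right _ _ hq0
  have e2 : (2*(r + a*q))/q = 2*r/q + 2*a := by
    rw [show 2*(r+a*q) = 2*r + 2*a*q by ring, Nat.add_mul_div_right _ _ hq0]
  have e3 : (2*(r + a*q)+1)/q = (2*r+1)/q + 2*a := by
    rw [show 2*(r+a*q)+1 = (2*r+1) + 2*a*q by ring, Nat.add_mul_div_right _ _ hq0]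
  have e4 : (3*(r + a*q))/q = 3*r/q + 3*a := by
    rw [show 3*(r+a*q) = 3*r + 3*a*q by ring, Nat.add_mul_div_right _ _ hq0]
  have e6 : (6*(r + a*q))/q = 6*r/q + 6*a := by
    rw [show 6*(r+a*q) = 6*r + 6*a*q by ring, Nat.add_mul_div_right _ _ hq0]
  rw [e2, e3, e4, e1, e6]
  have h0 : r / q = 0 := Nat.div_eq_of_lt hr
  rw [h0]
  have := key_r q r hq hr
  omega

lemma fact_dvd (n : ℕ) :
    Nat.factorial (2*n) * Nat.factorial (2*n+1) * Nat.factorial (3*n) ∣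
      Nat.factorial n * Nat.factorial (6*n) := by
  have hD : Nat.factorial (2*n) * Nat.factorial (2*n+1) * Nat.factorial (3*n) ≠ 0 :=
    by positivity
  have hE : Nat.factorial n * Nat.factorial (6*n) ≠ 0 := by positivity
  rw [← Nat.factorization_le_iff_dvd hD hE]
  intro p
  by_cases hp : p.Prime
  · haveI := Fact.mk hp
    have hlog : ∀ m : ℕ, m ≤ 6*n+1 → Nat.log p m < 6*n+2 :=
      fun m hm => lt_of_le_of_lt (Nat.log_le_self _ _) (by omega)
    rw [Nat.factorization_mul (mul_ne_zero (Nat.factorial_ne_zero _) (Nat.factorial_ne_zero _)) (Nat.factorial_ne_zero _),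
      Nat.factorization_mul (Nat.factorial_ne_zero _) (Nat.factorial_ne_zero _),
      Nat.factorization_mul (Nat.factorial_ne_zero _) (Nat.factorial_ne_zero _)]
    simp only [Finsupp.coe_add, Pi.add_apply]
    rw [Nat.factorization_def _ hp, Nat.factorization_def _ hp,
      Nat.factorization_def _ hp, Nat.factorization_def _ hp,
      Nat.factorization_def _ hp]
    rw [padicValNat_factorial (n := 2*n) (hlog _ (by omega)),
      padicValNat_factorial (n := 2*n+1) (hlog _ (by omega)),
      padicValNat_factorial (n := 3*n) (hlog _ (by omega)),
      padicValNat_factorial (n := n) (hlog _ (by omega)),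
      padicValNat_factorial (n := 6*n) (hlog _ (by omega))]
    rw [← Finset.sum_add_distrib, ← Finset.sum_add_distrib, ← Finset.sum_add_distrib]
    apply Finset.sum_le_sum
    intro i hi
    have hi1 : 1 ≤ i := (Finset.mem_Ico.mp hi).1
    have hq : 2 ≤ p ^ i :=
      le_trans hp.two_le (Nat.le_self_pow (by omega) p)
    exact key_q (p ^ i) n hq
  · simp only [Nat.factorization_eq_zero_of_not_prime _ hp]
    exact le_rfl

theorem stmt_10 (n : ℕ) (hn : 0 < n) :
    (2 * n + 1) * Nat.choose (2 * n) n ∣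
      Nat.choose (6 * n) (3 * n) * Nat.choose (3 * n) n ∧
    ∃ z : ℤ,
      ((Nat.factorial n : ℚ) * (Nat.factorial (6 * n) : ℚ)) /
        ((Nat.factorial (2 * n) : ℚ) * (Nat.factorial (2 * n + 1) : ℚ) *
          (Nat.factorial (3 * n) : ℚ)) = (z : ℚ) := by
  have hdvd := fact_dvd n
  have c1 : Nat.choose (2*n) n * (Nat.factorial n * Nat.factorial n) =
      Nat.factorial (2*n) := by
    have h := Nat.choose_mul_factorial_mul_factorial (show n ≤ 2*n by omega)
    rw [show 2*n - n = n by omega] at h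
    rw [← h]; ring
  have c2 : Nat.choose (3*n) n * (Nat.factorial n * Nat.factorial (2*n)) =
      Nat.factorial (3*n) := by
    have h := Nat.choose_mul_factorial_mul_factorial (show n ≤ 3*n by omega)
    rw [show 3*n - n = 2*n by omega] at h
    rw [← h]; ring
  have c3 : Nat.choose (6*n) (3*n) * (Nat.factorial (3*n) * Nat.factorial (3*n)) =
      Nat.factorial (6*n) := by
    have h := Nat.choose_mul_factorial_mul_factorial (show 3*n ≤ 6*n by omega)
    rw [show 6*n - 3*n = 3*n by omega] at h
    rw [← h]; ring
  have cf : Nat.factorial (2*n+1) = (2*n+1) * Nat.factorial (2*n) :=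
    Nat.factorial_succ (2*n)
  constructor
  · have hc : 0 < Nat.factorial n * Nat.factorial n * Nat.factorial (2*n) *
        Nat.factorial (3*n) := by positivity
    rw [← Nat.mul_dvd_mul_iff_right hc]
    have e1 : (2 * n + 1) * Nat.choose (2 * n) n *
        (Nat.factorial n * Nat.factorial n * Nat.factorial (2*n) * Nat.factorial (3*n)) =
        Nat.factorial (2*n) * Nat.factorial (2*n+1) * Nat.factorial (3*n) := by
      rw [cf, ← c1]; ring
    have e2 : Nat.choose (6 * n) (3 * n) * Nat.choose (3 * n) n *
        (Nat.factorial n * Nat.factorial n * Nat.factorial (2*n) * Nat.factorial (3*n)) =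
        Nat.factorial n * Nat.factorial (6*n) := by
      rw [← c3, ← c2]; ring
    rw [e1, e2]
    exact hdvd
  · obtain ⟨k, hk⟩ := hdvd
    refine ⟨(k : ℤ), ?_⟩
    have h0 : ((Nat.factorial (2 * n) : ℚ) * (Nat.factorial (2 * n + 1) : ℚ) *
        (Nat.factorial (3 * n) : ℚ)) ≠ 0 := by positivity
    rw [div_eq_iff h0]
    push_cast
    exact_mod_cast congrArg (fun x : ℕ => (x : ℚ)) (by rw [hk]; ring)
end
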